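/- Let m ≥ 1 and let G = C₈ᵐ × C₂ with generators a₁,…,a_m of the order-8 factors and h of the order-2 factor. In 𝔽₂[G], let u_m = ∏_{i=1}^{m} (a_i + a_i⁴ + a_i⁷) and u = 1 + h·u_m. Then the 𝔽₂-linear endomorphism of 𝔽₂[G] given by multiplication by u has range of dimension (3/2)·8ᵐ = 3·8ᵐ/2, and the endomorphism given by multiplication by u³ has range of dimension 8ᵐ/2. -/

import Mathlib

noncomputable section

open MonoidAlgebra

/-- The code generated by `u` in a group algebra: the `R`-span of `{g • u : g ∈ G}`. -/
def codeGen {R : Type*} [CommSemiring R] {G : Type*} [Monoid G]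
    (u : MonoidAlgebra R G) : Submodule R (MonoidAlgebra R G) :=
  Submodule.span R (Set.range fun g : G => MonoidAlgebra.of R G g * u)

/-- The weight (support size) of an element of a group algebra. -/
def wt {R : Type*} [Semiring R] {G : Type*} (x : MonoidAlgebra R G) : ℕ :=
  x.coeff.support.card

/-- The minimum distance of the code generated by `u`: the least weight of a nonzero
element of the code. -/
def minDist {R : Type*} [CommSemiring R] {G : Type*} [Monoid G]
    (u : MonoidAlgebra R G) : ℕ :=
  sInf {n | ∃ x ∈ codeGen u, x ≠ 0 ∧ wt x = n}

/-- The group `C₈ᵐ × C₂`, written multiplicatively. -/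
abbrev Gp (m : ℕ) : Type := Multiplicative ((Fin m → ZMod 8) × ZMod 2)

/-- The generator `aᵢ` of the `i`-th copy of `C₈`. -/
def agen (m : ℕ) (i : Fin m) : Gp m := Multiplicative.ofAdd (Pi.single i 1, 0)

/-- The generator `h` of the `C₂` factor. -/
def hgen (m : ℕ) : Gp m := Multiplicative.ofAdd (0, 1)

/-- `u_m = ∏ᵢ (aᵢ + aᵢ⁴ + aᵢ⁷)` in `𝔽₂[C₈ᵐ × C₂]`. -/
def um (m : ℕ) : MonoidAlgebra (ZMod 2) (Gp m) :=
  ∏ i : Fin m,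
    (of (ZMod 2) (Gp m) (agen m i) + of (ZMod 2) (Gp m) (agen m i) ^ 4 +
      of (ZMod 2) (Gp m) (agen m i) ^ 7)

/-- `u = 1 + h·u_m`. -/
def uu (m : ℕ) : MonoidAlgebra (ZMod 2) (Gp m) :=
  1 + of (ZMod 2) (Gp m) (hgen m) * um m


namespace RankAux
set_option linter.unusedSectionVars false
variable {m : ℕ}
abbrev Amod (m : ℕ) := MonoidAlgebra (ZMod 2) (Gp m)

theorem agen_pow (i : Fin m) (k : ℕ) :
    (agen m i) ^ k = Multiplicative.ofAdd (Pi.single i (k : ZMod 8), 0) := by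
  have h : (agen m i) ^ k = Multiplicative.ofAdd (k • (Pi.single i 1, (0 : ZMod 2))) := by
    rw [agen, ← ofAdd_nsmul]
  rw [h]
  congr 1
  rw [Prod.smul_def]
  congr 1
  · ext j
    by_cases hj : j = i
    · subst hj; simp [Pi.single_eq_same, nsmul_eq_mul]
    · simp [Pi.single_eq_of_ne hj]
  · simp

theorem agen_pow8 (i : Fin m) : (agen m i) ^ 8 = 1 := by
  rw [agen_pow]
  have h : ((8 : ℕ) : ZMod 8) = 0 := by decide
  rw [h]
  simp [Pi.single_zero]

theorem hgen_sq : (hgen m) * (hgen m) = 1 := by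
  show Multiplicative.ofAdd ((0,1) + ((0,1) : (Fin m → ZMod 8) × ZMod 2)) = 1
  norm_num
  rfl

theorem two_eq_zero : (2 : Amod m) = 0 := by
  have h1 : (2 : Amod m) = algebraMap (ZMod 2) (Amod m) 2 := (map_ofNat _ 2).symm
  have h2 : (2 : ZMod 2) = 0 := by decide
  rw [h1, h2, map_zero]

theorem self_add_self (x : Amod m) : x + x = 0 := by
  have h : x + x = 2 * x := by ring
  rw [h, two_eq_zero, zero_mul]

theorem char2_add_eq_zero_iff {x y : Amod m} : x + y = 0 ↔ x = y := by
  constructor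
  · intro h
    have hx : x = x + (y + y) := by rw [self_add_self, add_zero]
    rw [hx, ← add_assoc, h, zero_add]
  · rintro rfl; exact self_add_self _

theorem char2_sq (x y : Amod m) : (x + y)^2 = x^2 + y^2 := by
  have h : (x+y)^2 = x^2 + y^2 + 2*(x*y) := by ring
  rw [h, two_eq_zero, zero_mul, add_zero]

/-- the element `eᵢ = 1 + aᵢ² + aᵢ⁶` -/
def ee (m : ℕ) (i : Fin m) : Amod m :=
  1 + of (ZMod 2) (Gp m) ((agen m i)^2) + of (ZMod 2) (Gp m) ((agen m i)^6)

theorem agen_pow_congr (i : Fin m) (k l : ℕ) (h : (k : ZMod 8) = (l : ZMod 8)) :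
    (agen m i)^k = (agen m i)^l := by rw [agen_pow, agen_pow, h]

theorem w_sq (i : Fin m) :
    (of (ZMod 2) (Gp m) (agen m i) + of (ZMod 2) (Gp m) (agen m i) ^ 4 +
      of (ZMod 2) (Gp m) (agen m i) ^ 7)^2 = ee m i := by
  rw [char2_sq, char2_sq]
  simp only [← map_pow, ← pow_mul]
  norm_num
  rw [agen_pow8, agen_pow_congr i 14 6 (by decide), ee]
  simp only [MonoidAlgebra.of_apply, MonoidAlgebra.one_def]
  abel

theorem ee_sq (i : Fin m) : (ee m i)^2 = 1 := by
  rw [ee, char2_sq, char2_sq, one_pow]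
  simp only [← map_pow, ← pow_mul]
  rw [show (2*2 : ℕ) = 4 from rfl, show (6*2 : ℕ) = 12 from rfl,
    agen_pow_congr i 12 4 (by decide), add_assoc, self_add_self, add_zero]

/-- `c = v²` -/
def cc (m : ℕ) : Amod m := ∏ i : Fin m, ee m i

theorem um_sq : (um m)^2 = cc m := by
  rw [um, ← Finset.prod_pow]
  exact Finset.prod_congr rfl fun i _ => w_sq i

theorem cc_sq : (cc m)^2 = 1 := by
  rw [cc, ← Finset.prod_pow]
  rw [Finset.prod_congr rfl fun i _ => ee_sq i, Finset.prod_const_one]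

theorem hh_sq : of (ZMod 2) (Gp m) (hgen m) * of (ZMod 2) (Gp m) (hgen m) = 1 := by
  rw [← map_mul, hgen_sq, map_one]

theorem uu_sq : (uu m)^2 = 1 + cc m := by
  rw [uu, char2_sq, one_pow, mul_pow, ← map_pow, pow_two, hgen_sq, map_one, one_mul, um_sq]

theorem uu_pow4 : (uu m)^4 = 0 := by
  have h : (uu m)^4 = ((uu m)^2)^2 := by ring
  rw [h, uu_sq, char2_sq, one_pow, cc_sq, self_add_self]

theorem uu_cube : (uu m)^3 = (1 + cc m) * uu m := by
  have h : (uu m)^3 = (uu m)^2 * uu m := by ring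
  rw [h, uu_sq]

section grading
variable {M : Type*} [AddCancelCommMonoid M] [DecidableEq M]

/-- component of `x` of `κ`-degree `t` -/
def pic (κ : Gp m → M) (t : M) (x : Amod m) : Amod m :=
  MonoidAlgebra.ofCoeff (Finsupp.filter (fun g => κ g = t) x.coeff)

theorem pic_add (κ : Gp m → M) (t : M) (x y : Amod m) :
    pic κ t (x + y) = pic κ t x + pic κ t y := congrArg MonoidAlgebra.ofCoeff Finsupp.filter_add

theorem pic_zero (κ : Gp m → M) (t : M) : pic κ t (0 : Amod m) = 0 := congrArg MonoidAlgebra.ofCoeff (Finsupp.filter_zero _)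

theorem pic_eq_self {κ : Gp m → M} {t : M} {x : Amod m} (h : ∀ g ∈ x.coeff.support, κ g = t) :
    pic κ t x = x := by
  apply MonoidAlgebra.coeff_injective
  apply (Finsupp.filter_eq_self_iff _ _).2
  intro g hg
  exact h g (Finsupp.mem_support_iff.2 hg)

theorem pic_eq_zero {κ : Gp m → M} {t : M} {x : Amod m} (h : ∀ g ∈ x.coeff.support, κ g ≠ t) :
    pic κ t x = 0 := by
  apply MonoidAlgebra.coeff_injective
  apply (Finsupp.filter_eq_zero_iff _ _).2
  intro g hg
  by_contra hne
  exact h g (Finsupp.mem_support_iff.2 hne) hg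

theorem homog_mul {κ : Gp m → M} (hκ : ∀ g g', κ (g * g') = κ g + κ g')
    {s t : M} {x y : Amod m} (hx : ∀ g ∈ x.coeff.support, κ g = s) (hy : ∀ g ∈ y.coeff.support, κ g = t) :
    ∀ g ∈ (x * y).coeff.support, κ g = s + t := by
  intro g hg
  have h2 := MonoidAlgebra.support_coeff_mul_subset x y hg
  rw [Finset.mem_mul] at h2
  obtain ⟨a, ha, b, hb, rfl⟩ := h2
  rw [hκ, hx a ha, hy b hb]

theorem homog_single (κ : Gp m → M) (g : Gp m) (r : ZMod 2) :
    ∀ g' ∈ (MonoidAlgebra.single g r : Amod m).coeff.support, κ g' = κ g := by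
  intro g' hg'
  have := Finsupp.support_single_subset hg'
  rw [Finset.mem_singleton] at this
  rw [this]

theorem pic_mul_homog {κ : Gp m → M} (hκ : ∀ g g', κ (g * g') = κ g + κ g')
    {s : M} {z : Amod m} (hz : ∀ g ∈ z.coeff.support, κ g = s) (t : M) (x : Amod m) :
    pic κ (s + t) (z * x) = z * pic κ t x := by
  induction x using MonoidAlgebra.induction_linear with
  | zero => simp [pic_zero]
  | add f g hf hg => rw [mul_add, pic_add, pic_add, hf, hg, mul_add]
  | single g r =>
    by_cases hgt : κ g = t
    · rw [pic_eq_self (homog_mul hκ hz (fun g' hg' => (homog_single κ g r g' hg').trans hgt)),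
        pic_eq_self (fun g' hg' => (homog_single κ g r g' hg').trans hgt)]
    · rw [pic_eq_zero (x := MonoidAlgebra.single g r) (fun g' hg' => by
        rw [homog_single κ g r g' hg']; exact hgt), mul_zero]
      apply pic_eq_zero
      intro g' hg'
      rw [homog_mul hκ hz (homog_single κ g r) g' hg']
      intro hcon
      exact hgt (add_left_cancel hcon)
end grading


def k8 (i₀ : Fin m) : Gp m → ZMod 8 := fun g => (Multiplicative.toAdd g).1 i₀
def k2 : Gp m → ZMod 2 := fun g => (Multiplicative.toAdd g).2

theorem k8_hom (i₀ : Fin m) : ∀ g g' : Gp m, k8 i₀ (g*g') = k8 i₀ g + k8 i₀ g' := fun _ _ => rfl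
theorem k2_hom : ∀ g g' : Gp m, k2 (g*g') = k2 g + k2 g' := fun _ _ => rfl

theorem supp_of (g : Gp m) : ∀ g' ∈ (of (ZMod 2) (Gp m) g).coeff.support, g' = g := by
  intro g' hg'
  rw [MonoidAlgebra.of_apply] at hg'
  exact Finset.mem_singleton.mp (Finsupp.support_single_subset hg')

theorem homog_of {M : Type*} [AddCancelCommMonoid M] [DecidableEq M] (κ : Gp m → M) (g : Gp m) :
    ∀ g' ∈ (of (ZMod 2) (Gp m) g).coeff.support, κ g' = κ g := by
  intro g' hg'; rw [supp_of g g' hg']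

theorem supp_one : ∀ g' ∈ (1 : Amod m).coeff.support, g' = (1 : Gp m) := supp_of 1

theorem k8_one (i₀ : Fin m) : k8 i₀ (1 : Gp m) = 0 := rfl

theorem k8_agen_pow (i₀ : Fin m) (k : ℕ) : k8 i₀ ((agen m i₀)^k) = (k : ZMod 8) := by
  simp [k8, agen_pow]

theorem k8_agen_pow_ne {i₀ i : Fin m} (hne : i ≠ i₀) (k : ℕ) : k8 i₀ ((agen m i)^k) = 0 := by
  simp [k8, agen_pow, Pi.single_eq_of_ne (Ne.symm hne)]

theorem ee_homog8 {i₀ i : Fin m} (hne : i ≠ i₀) :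
    ∀ g ∈ (ee m i).coeff.support, k8 i₀ g = 0 := by
  intro g hg
  rw [ee] at hg
  rcases Finset.mem_union.mp (Finsupp.support_add hg) with h | h
  · rcases Finset.mem_union.mp (Finsupp.support_add h) with h1 | h1
    · rw [supp_one g h1, k8_one]
    · rw [homog_of (k8 i₀) _ g h1, k8_agen_pow_ne hne]
  · rw [homog_of (k8 i₀) _ g h, k8_agen_pow_ne hne]

theorem prod_homog8 (i₀ : Fin m) (s : Finset (Fin m)) (hs : i₀ ∉ s) :
    ∀ g ∈ (∏ i ∈ s, ee m i).coeff.support, k8 i₀ g = 0 := by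
  refine Finset.prod_induction _ (fun x : Amod m => ∀ g ∈ x.coeff.support, k8 i₀ g = 0) ?_ ?_ ?_
  · intro a b ha hb
    intro g hg
    rw [homog_mul (k8_hom i₀) ha hb g hg, add_zero]
  · intro g hg; rw [supp_one g hg, k8_one]
  · intro i hi
    exact ee_homog8 (fun h => hs (h ▸ hi))

theorem cancel_of (g : Gp m) {X : Amod m} (h : of (ZMod 2) (Gp m) g * X = 0) : X = 0 := by
  have h2 : of (ZMod 2) (Gp m) g⁻¹ * (of (ZMod 2) (Gp m) g * X) = X := by
    rw [← mul_assoc, ← map_mul, inv_mul_cancel, map_one, one_mul]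
  rw [← h2, h, mul_zero]

theorem core_ann (i₀ : Fin m) (y : Amod m)
    (hy : ∀ g ∈ y.coeff.support, ((Multiplicative.toAdd g).1 i₀).val < 4)
    (heq : y = cc m * y) : y = 0 := by
  classical
  set c'' : Amod m := ∏ i ∈ Finset.univ.erase i₀, ee m i with hc''
  have hsplit : cc m = ee m i₀ * c'' :=
    (Finset.mul_prod_erase _ _ (Finset.mem_univ i₀)).symm
  have hc2 : c'' * c'' = 1 := by
    have hone : ∀ i ∈ Finset.univ.erase i₀, ee m i * ee m i = 1 := fun i _ => by
      rw [← pow_two]; exact ee_sq i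
    rw [hc'', ← Finset.prod_mul_distrib, Finset.prod_congr rfl hone, Finset.prod_const_one]
  have hc''homog : ∀ g ∈ c''.coeff.support, k8 i₀ g = 0 :=
    prod_homog8 i₀ _ (Finset.notMem_erase i₀ _)
  have cancel_c'' : ∀ X : Amod m, c'' * X = 0 → X = 0 := by
    intro X h
    have : (c'' * c'') * X = 0 := by rw [mul_assoc, h, mul_zero]
    rwa [hc2, one_mul] at this
  set a2 := of (ZMod 2) (Gp m) ((agen m i₀)^2) with ha2
  set a6 := of (ZMod 2) (Gp m) ((agen m i₀)^6) with ha6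
  have ha26 : a2 * a6 = 1 := by
    rw [ha2, ha6, ← map_mul, ← pow_add]
    rw [show (2+6 : ℕ) = 8 from rfl, agen_pow8, map_one]
  have heq' : y = c'' * (ee m i₀ * y) := by
    conv_lhs => rw [heq]
    rw [hsplit]; ring
  set Y : ZMod 8 → Amod m := fun t => pic (k8 i₀) t y with hY
  have hzero : ∀ t : ZMod 8, 4 ≤ t.val → Y t = 0 := by
    intro t ht
    apply pic_eq_zero
    intro g hg hcon
    have := hy g hg
    rw [show (Multiplicative.toAdd g).1 i₀ = k8 i₀ g from rfl, hcon] at this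
    omega
  have hcomp : ∀ t : ZMod 8, Y t = c'' * (Y t + a2 * Y (t - 2) + a6 * Y (t - 6)) := by
    intro t
    have h1 : pic (k8 i₀) t y = pic (k8 i₀) t (c'' * (ee m i₀ * y)) := by rw [← heq']
    have h2 := pic_mul_homog (k8_hom i₀) hc''homog t (ee m i₀ * y)
    rw [zero_add] at h2
    have h3 : ee m i₀ * y = y + a2 * y + a6 * y := by rw [ee, ha2, ha6]; ring
    have e2 := pic_mul_homog (k8_hom i₀) (homog_of (k8 i₀) ((agen m i₀)^2)) (t - 2) y
    rw [k8_agen_pow i₀ 2, show ((2:ℕ) : ZMod 8) + (t - 2) = t by push_cast; ring, ← ha2] at e2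
    have e6 := pic_mul_homog (k8_hom i₀) (homog_of (k8 i₀) ((agen m i₀)^6)) (t - 6) y
    rw [k8_agen_pow i₀ 6, show ((6:ℕ) : ZMod 8) + (t - 6) = t by push_cast; ring, ← ha6] at e6
    have h2' : pic (k8 i₀) t (ee m i₀ * y)
        = Y t + a2 * Y (t - 2) + a6 * Y (t - 6) := by
      rw [h3, pic_add, pic_add, e2, e6]
    calc Y t = pic (k8 i₀) t y := rfl
      _ = pic (k8 i₀) t (c'' * (ee m i₀ * y)) := h1
      _ = c'' * pic (k8 i₀) t (ee m i₀ * y) := h2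
      _ = c'' * (Y t + a2 * Y (t - 2) + a6 * Y (t - 6)) := by rw [h2']
  have hall : ∀ t : ZMod 8, Y t = 0 := by
    have hY4 : Y 4 = 0 := hzero 4 (by decide)
    have hY5 : Y 5 = 0 := hzero 5 (by decide)
    have hY6 : Y 6 = 0 := hzero 6 (by decide)
    have hY7 : Y 7 = 0 := hzero 7 (by decide)
    have hY2 : Y 2 = 0 := by
      have h := hcomp 4
      rw [hY4, show (4 - 2 : ZMod 8) = 2 by decide, show (4 - 6 : ZMod 8) = 6 by decide,
        hY6, mul_zero, zero_add, add_zero] at h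
      have := cancel_c'' _ h.symm
      have h2 : a6 * (a2 * Y 2) = 0 := by rw [this, mul_zero]
      rwa [← mul_assoc, mul_comm a6 a2, ha26, one_mul] at h2
    have hY3 : Y 3 = 0 := by
      have h := hcomp 5
      rw [hY5, show (5 - 2 : ZMod 8) = 3 by decide, show (5 - 6 : ZMod 8) = 7 by decide,
        hY7, mul_zero, zero_add, add_zero] at h
      have := cancel_c'' _ h.symm
      have h2 : a6 * (a2 * Y 3) = 0 := by rw [this, mul_zero]
      rwa [← mul_assoc, mul_comm a6 a2, ha26, one_mul] at h2
    have hY0 : Y 0 = 0 := by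
      have h := hcomp 6
      rw [hY6, show (6 - 2 : ZMod 8) = 4 by decide, show (6 - 6 : ZMod 8) = 0 by decide,
        hY4, mul_zero, add_zero, zero_add] at h
      have := cancel_c'' _ h.symm
      have h2 : a2 * (a6 * Y 0) = 0 := by rw [this, mul_zero]
      rwa [← mul_assoc, ha26, one_mul] at h2
    have hY1 : Y 1 = 0 := by
      have h := hcomp 7
      rw [hY7, show (7 - 2 : ZMod 8) = 5 by decide, show (7 - 6 : ZMod 8) = 1 by decide,
        hY5, mul_zero, add_zero, zero_add] at h
      have := cancel_c'' _ h.symm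
      have h2 : a2 * (a6 * Y 1) = 0 := by rw [this, mul_zero]
      rwa [← mul_assoc, ha26, one_mul] at h2
    intro t
    rcases (by decide : ∀ t : ZMod 8, t = 0 ∨ t = 1 ∨ t = 2 ∨ t = 3 ∨ t = 4 ∨ t = 5 ∨ t = 6 ∨ t = 7) t with
      h | h | h | h | h | h | h | h <;> subst h <;> assumption
  apply MonoidAlgebra.ext
  apply Finsupp.ext
  intro g
  have h1 : (Y (k8 i₀ g)).coeff g = y.coeff g := Finsupp.filter_apply_pos _ _ rfl
  rw [hall (k8 i₀ g)] at h1
  rw [← h1]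

-- κ2 homogeneity
theorem k2_gB (n : Fin m → ZMod 8) : k2 (Multiplicative.ofAdd (n, (0 : ZMod 2))) = 0 := rfl
theorem k2_hgen : k2 (hgen m) = 1 := rfl

theorem k2_agen_pow (i : Fin m) (k : ℕ) : k2 ((agen m i)^k) = 0 := by
  rw [agen_pow]; rfl

theorem w_homog2 (i : Fin m) :
    ∀ g ∈ (of (ZMod 2) (Gp m) (agen m i) + of (ZMod 2) (Gp m) (agen m i) ^ 4 +
      of (ZMod 2) (Gp m) (agen m i) ^ 7).coeff.support, k2 g = 0 := by
  intro g hg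
  rw [← map_pow, ← map_pow] at hg
  rcases Finset.mem_union.mp (Finsupp.support_add hg) with h | h
  · rcases Finset.mem_union.mp (Finsupp.support_add h) with h1 | h1
    · rw [supp_of _ g h1, ← pow_one (agen m i), k2_agen_pow]
    · rw [supp_of _ g h1, k2_agen_pow]
  · rw [supp_of _ g h, k2_agen_pow]

theorem prod_homog2 {s : Finset (Fin m)} {f : Fin m → Amod m}
    (hf : ∀ i ∈ s, ∀ g ∈ (f i).coeff.support, k2 g = 0) :
    ∀ g ∈ (∏ i ∈ s, f i).coeff.support, k2 g = 0 := by
  refine Finset.prod_induction _ (fun x : Amod m => ∀ g ∈ x.coeff.support, k2 g = 0) ?_ ?_ hf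
  · intro a b ha hb g hg
    rw [homog_mul k2_hom ha hb g hg, add_zero]
  · intro g hg; rw [supp_one g hg]; rfl

theorem um_homog2 : ∀ g ∈ (um m).coeff.support, k2 g = 0 := by
  rw [um]; exact prod_homog2 (fun i _ => w_homog2 i)

theorem ee_homog2 (i : Fin m) : ∀ g ∈ (ee m i).coeff.support, k2 g = 0 := by
  intro g hg
  rw [ee] at hg
  rcases Finset.mem_union.mp (Finsupp.support_add hg) with h | h
  · rcases Finset.mem_union.mp (Finsupp.support_add h) with h1 | h1
    · rw [supp_one g h1]; rfl
    · rw [supp_of _ g h1, k2_agen_pow]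
  · rw [supp_of _ g h, k2_agen_pow]

theorem cc_homog2 : ∀ g ∈ (cc m).coeff.support, k2 g = 0 := by
  rw [cc]; exact prod_homog2 (fun i _ => ee_homog2 i)

theorem one_add_cc_homog2 : ∀ g ∈ ((1 : Amod m) + cc m).coeff.support, k2 g = 0 := by
  intro g hg
  rcases Finset.mem_union.mp (Finsupp.support_add hg) with h | h
  · rw [supp_one g h]; rfl
  · exact cc_homog2 g h

-- index for the D-families
def navD (i₀ : Fin m) (d : Fin 4 × ({ i : Fin m // i ≠ i₀ } → ZMod 8)) : Fin m → ZMod 8 :=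
  fun j => if h : j = i₀ then ((d.1 : ℕ) : ZMod 8) else d.2 ⟨j, h⟩

theorem navD_at (i₀ : Fin m) (d) : navD i₀ d i₀ = ((d.1 : ℕ) : ZMod 8) := by simp [navD]

theorem navD_val (i₀ : Fin m) (d) : (navD i₀ d i₀).val < 4 := by
  rw [navD_at, ZMod.val_cast_of_lt (lt_trans d.1.isLt (by norm_num))]
  exact d.1.isLt

theorem navD_inj (i₀ : Fin m) : Function.Injective (navD i₀) := by
  intro d e h
  have h0 : ((d.1:ℕ):ZMod 8) = ((e.1:ℕ):ZMod 8) := by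
    rw [← navD_at i₀ d, ← navD_at i₀ e, h]
  have h1 : d.1 = e.1 := by
    have h2 := congrArg ZMod.val h0
    rw [ZMod.val_cast_of_lt (lt_trans d.1.isLt (by norm_num)),
      ZMod.val_cast_of_lt (lt_trans e.1.isLt (by norm_num))] at h2
    exact Fin.ext h2
  have h2 : d.2 = e.2 := by
    funext j
    have h3 := congrFun h j.1
    rw [navD, navD] at h3
    simpa [dif_neg j.2] using h3
  exact Prod.ext h1 h2

def gB (n : Fin m → ZMod 8) : Gp m := Multiplicative.ofAdd (n, 0)
def gD (i₀ : Fin m) (d : Fin 4 × ({ i : Fin m // i ≠ i₀ } → ZMod 8)) : Gp m := gB (navD i₀ d)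

theorem gB_inj : Function.Injective (gB (m := m)) := by
  intro a b h
  have := congrArg Multiplicative.toAdd h
  exact congrArg Prod.fst this

theorem gD_inj (i₀ : Fin m) : Function.Injective (gD i₀) :=
  fun a b h => navD_inj i₀ (gB_inj h)

-- coefficient sums
section ysum
variable {ι : Type*} [Fintype ι] (emb : ι → Gp m) (cf : ι → ZMod 2)

def ysum : Amod m := ∑ i : ι, MonoidAlgebra.single (emb i) (cf i)

theorem ysum_apply (hemb : Function.Injective emb) (j : ι) : (ysum emb cf).coeff (emb j) = cf j := by
  rw [ysum, MonoidAlgebra.coeff_sum, Finset.sum_apply']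
  rw [Finset.sum_eq_single j]
  · rw [MonoidAlgebra.coeff_single, Finsupp.single_eq_same]
  · intro i _ hne
    rw [MonoidAlgebra.coeff_single]
    exact Finsupp.single_eq_of_ne' (fun hc => hne (hemb hc))
  · intro hj; exact absurd (Finset.mem_univ j) hj

theorem ysum_support : ∀ g ∈ (ysum emb cf).coeff.support, ∃ i, emb i = g := by
  intro g hg
  rw [ysum, MonoidAlgebra.coeff_sum] at hg
  obtain ⟨i, _, hi⟩ := Finsupp.mem_support_finset_sum g hg
  exact ⟨i, (Finset.mem_singleton.mp (Finsupp.support_single_subset hi)).symm⟩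

theorem ysum_mul (z : Amod m) :
    ∑ i : ι, cf i • (of (ZMod 2) (Gp m) (emb i) * z) = ysum emb cf * z := by
  rw [ysum, Finset.sum_mul]
  refine Finset.sum_congr rfl fun i _ => ?_
  rw [MonoidAlgebra.of_apply, ← smul_mul_assoc, MonoidAlgebra.smul_single, smul_eq_mul, mul_one]
end ysum

theorem ysum_homog2 {ι : Type*} [Fintype ι] (nv : ι → Fin m → ZMod 8) (cf : ι → ZMod 2) :
    ∀ g ∈ (ysum (fun i => gB (nv i)) cf).coeff.support, k2 g = 0 := by
  intro g hg
  obtain ⟨i, hi⟩ := ysum_support _ cf g hg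
  rw [← hi]; rfl

/-- key annihilation: an element supported on `i₀`-coordinates of val `< 4`
killed by `1 + c` is zero -/
theorem key_ann (i₀ : Fin m) (y : Amod m)
    (hy : ∀ g ∈ y.coeff.support, ((Multiplicative.toAdd g).1 i₀).val < 4)
    (h : (1 + cc m) * y = 0) : y = 0 := by
  apply core_ann i₀ y hy
  rw [add_mul, one_mul] at h
  exact char2_add_eq_zero_iff.mp h

theorem gD_val (i₀ : Fin m) (d) (g : Gp m) (hg : gD i₀ d = g) :
    ((Multiplicative.toAdd g).1 i₀).val < 4 := by
  rw [← hg]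
  exact navD_val i₀ d

/-- linear independence of the family for `u³` -/
theorem indep3 (i₀ : Fin m) :
    LinearIndependent (ZMod 2)
      (fun d : Fin 4 × ({ i : Fin m // i ≠ i₀ } → ZMod 8) =>
        of (ZMod 2) (Gp m) (gD i₀ d) * (uu m)^3) := by
  rw [Fintype.linearIndependent_iff]
  intro cf hcf
  set y : Amod m := ysum (gD i₀) cf with hy
  have hmul : y * (uu m)^3 = 0 := by rw [hy, ← ysum_mul]; exact hcf
  set hh := of (ZMod 2) (Gp m) (hgen m) with hhh
  set v := um m with hv
  set z := ((1 : Amod m) + cc m) * y with hz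
  have hexp : y * (uu m)^3 = z + hh * (v * z) := by
    rw [uu_cube, uu, hz, hhh, hv]; ring
  have hzhom : ∀ g ∈ z.coeff.support, k2 g = 0 := by
    intro g hg
    rw [homog_mul k2_hom one_add_cc_homog2 (ysum_homog2 (fun d => navD i₀ d) cf) g hg, add_zero]
  have hvz : ∀ g ∈ (v * z).coeff.support, k2 g = 0 := by
    intro g hg
    rw [homog_mul k2_hom um_homog2 hzhom g hg, add_zero]
  have hhvz : ∀ g ∈ (hh * (v * z)).coeff.support, k2 g = 1 := by
    intro g hg
    rw [homog_mul k2_hom (homog_of k2 (hgen m)) hvz g hg, k2_hgen, add_zero]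
  have hz0 : z = 0 := by
    have h0 := congrArg (pic k2 (0 : ZMod 2)) (hexp.symm.trans hmul)
    rw [pic_add, pic_eq_self hzhom, pic_eq_zero (fun g hg => by rw [hhvz g hg]; decide),
      add_zero, pic_zero] at h0
    exact h0
  have hy0 : y = 0 := by
    apply key_ann i₀ y _ hz0
    intro g hg
    obtain ⟨d, hd⟩ := ysum_support (gD i₀) cf g hg
    exact gD_val i₀ d g hd
  intro d
  have := ysum_apply (gD i₀) cf (gD_inj i₀) d
  rw [← hy, hy0] at this
  exact this.symm

/-- linear independence of the family for `u` -/
theorem indep1 (i₀ : Fin m) :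
    LinearIndependent (ZMod 2)
      (Sum.elim
        (fun n : Fin m → ZMod 8 => of (ZMod 2) (Gp m) (gB n) * uu m)
        (fun d : Fin 4 × ({ i : Fin m // i ≠ i₀ } → ZMod 8) =>
          of (ZMod 2) (Gp m) (hgen m * gD i₀ d) * uu m)) := by
  rw [Fintype.linearIndependent_iff]
  intro cf hcf
  set hh := of (ZMod 2) (Gp m) (hgen m) with hhh
  set v := um m with hv
  set p : Amod m := ysum gB (fun n => cf (Sum.inl n)) with hp
  set q : Amod m := ysum (gD i₀) (fun d => cf (Sum.inr d)) with hq
  have hsplit : (p + hh * q) * uu m = 0 := by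
    rw [← hcf, Fintype.sum_sum_type]
    simp only [Sum.elim_inl, Sum.elim_inr]
    rw [add_mul]
    congr 1
    · rw [hp, ysum_mul]
    · rw [mul_assoc, hq, ← ysum_mul (gD i₀) (fun d => cf (Sum.inr d)) (uu m), Finset.mul_sum]
      refine Finset.sum_congr rfl fun d _ => ?_
      rw [mul_smul_comm, map_mul, ← hhh, mul_assoc]
  have hexp : (p + hh * q) * uu m = (p + v * q) + hh * (v * p + q) := by
    calc (p + hh * q) * uu m = (p + (hh * hh) * (v * q)) + hh * (v * p + q) := by
          rw [uu, ← hhh, ← hv]; ring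
      _ = (p + v * q) + hh * (v * p + q) := by rw [hh_sq, one_mul]
  have hphom : ∀ g ∈ p.coeff.support, k2 g = 0 := ysum_homog2 (fun n => n) (fun n => cf (Sum.inl n))
  have hqhom : ∀ g ∈ q.coeff.support, k2 g = 0 := ysum_homog2 (fun d => navD i₀ d) (fun d => cf (Sum.inr d))
  have hvq : ∀ g ∈ (v * q).coeff.support, k2 g = 0 := fun g hg => by
    rw [homog_mul k2_hom um_homog2 hqhom g hg, add_zero]
  have hvp : ∀ g ∈ (v * p).coeff.support, k2 g = 0 := fun g hg => by
    rw [homog_mul k2_hom um_homog2 hphom g hg, add_zero]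
  have hA : ∀ g ∈ (p + v * q).coeff.support, k2 g = 0 := by
    intro g hg
    rcases Finset.mem_union.mp (Finsupp.support_add hg) with h | h
    · exact hphom g h
    · exact hvq g h
  have hB0 : ∀ g ∈ (v * p + q).coeff.support, k2 g = 0 := by
    intro g hg
    rcases Finset.mem_union.mp (Finsupp.support_add hg) with h | h
    · exact hvp g h
    · exact hqhom g h
  have hB : ∀ g ∈ (hh * (v * p + q)).coeff.support, k2 g = 1 := fun g hg => by
    rw [homog_mul k2_hom (homog_of k2 (hgen m)) hB0 g hg, k2_hgen, add_zero]
  have heq0 : (p + v * q) + hh * (v * p + q) = 0 := by rw [← hexp]; exact hsplit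
  have hA0 : p + v * q = 0 := by
    have h0 := congrArg (pic k2 (0 : ZMod 2)) heq0
    rwa [pic_add, pic_eq_self hA, pic_eq_zero (fun g hg => by rw [hB g hg]; decide),
      add_zero, pic_zero] at h0
  have hB0' : v * p + q = 0 := by
    have h1 := congrArg (pic k2 (1 : ZMod 2)) heq0
    rw [pic_add, pic_eq_zero (fun g hg => by rw [hA g hg]; decide),
      pic_eq_self hB, zero_add, pic_zero] at h1
    exact cancel_of (hgen m) (by rw [← hhh]; exact h1)
  have hpq : p = v * q := char2_add_eq_zero_iff.mp hA0
  have hqp : v * p = q := char2_add_eq_zero_iff.mp hB0'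
  have hqc : q = cc m * q := by
    conv_lhs => rw [← hqp, hpq]
    rw [← mul_assoc, ← pow_two, hv, um_sq]
  have hq0 : q = 0 := by
    apply core_ann i₀ q _ hqc
    intro g hg
    obtain ⟨d, hd⟩ := ysum_support (gD i₀) (fun d => cf (Sum.inr d)) g hg
    exact gD_val i₀ d g hd
  have hp0 : p = 0 := by rw [hpq, hq0, mul_zero]
  intro i
  cases i with
  | inl n =>
    have := ysum_apply gB (fun n => cf (Sum.inl n)) gB_inj n
    rw [← hp, hp0] at this
    exact this.symm
  | inr d =>
    have := ysum_apply (gD i₀) (fun d => cf (Sum.inr d)) (gD_inj i₀) d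
    rw [← hq, hq0] at this
    exact this.symm

theorem finiteDim : Module.Finite (ZMod 2) (Amod m) :=
  Module.Finite.of_basis (MonoidAlgebra.basis (Gp m) (ZMod 2) : Module.Basis (Gp m) (ZMod 2) (Amod m))

theorem finrank_A : Module.finrank (ZMod 2) (Amod m) = 2 * 8 ^ m := by
  have h : Module.finrank (ZMod 2) (Amod m) = Fintype.card (Gp m) :=
    Module.finrank_eq_card_basis (MonoidAlgebra.basis (Gp m) (ZMod 2) : Module.Basis (Gp m) (ZMod 2) (Amod m))
  rw [h]
  simp [Gp, mul_comm]

theorem rank_main (m : ℕ) (hm : 1 ≤ m) :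
    Module.finrank (ZMod 2)
        (LinearMap.range (LinearMap.mulRight (ZMod 2) (uu m))) = 3 * 8 ^ m / 2 ∧
      Module.finrank (ZMod 2)
        (LinearMap.range (LinearMap.mulRight (ZMod 2) (uu m ^ 3))) = 8 ^ m / 2 := by
  obtain ⟨m', rfl⟩ : ∃ m', m = m' + 1 := ⟨m - 1, by omega⟩
  set i₀ : Fin (m' + 1) := ⟨m', by omega⟩ with hi₀
  haveI : Module.Finite (ZMod 2) (Amod (m' + 1)) := finiteDim
  set T1 := LinearMap.mulRight (ZMod 2) (uu (m' + 1)) with hT1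
  set T3 := LinearMap.mulRight (ZMod 2) (uu (m' + 1) ^ 3) with hT3
  -- cardinalities
  have hcard_sub : Fintype.card {i : Fin (m' + 1) // i ≠ i₀} = m' := by
    have := Fintype.card_subtype_compl (fun i : Fin (m' + 1) => i = i₀)
    rw [Fintype.card_subtype_eq, Fintype.card_fin] at this
    simpa using this
  have hcardD : Fintype.card (Fin 4 × ({i : Fin (m' + 1) // i ≠ i₀} → ZMod 8)) = 4 * 8 ^ m' := by
    rw [Fintype.card_prod, Fintype.card_fun, hcard_sub]
    norm_num [ZMod]
  have hcardI : Fintype.card ((Fin (m' + 1) → ZMod 8) ⊕ Fin 4 × ({i : Fin (m' + 1) // i ≠ i₀} → ZMod 8))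
      = 12 * 8 ^ m' := by
    rw [Fintype.card_sum, Fintype.card_fun, hcardD]
    norm_num [ZMod]
    ring
  -- lower bounds for the ranks
  have hsub3 : Submodule.span (ZMod 2)
      (Set.range (fun d : Fin 4 × ({i : Fin (m' + 1) // i ≠ i₀} → ZMod 8) =>
        of (ZMod 2) (Gp (m' + 1)) (gD i₀ d) * (uu (m' + 1))^3)) ≤ LinearMap.range T3 := by
    rw [Submodule.span_le]
    rintro x ⟨d, rfl⟩
    exact ⟨of (ZMod 2) (Gp (m' + 1)) (gD i₀ d), by rw [hT3, LinearMap.mulRight_apply]⟩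
  have hlow3 : 4 * 8 ^ m' ≤ Module.finrank (ZMod 2) (LinearMap.range T3) := by
    calc 4 * 8 ^ m' = Fintype.card (Fin 4 × ({i : Fin (m' + 1) // i ≠ i₀} → ZMod 8)) := hcardD.symm
      _ = Module.finrank (ZMod 2) (Submodule.span (ZMod 2) (Set.range _)) :=
          (finrank_span_eq_card (indep3 i₀)).symm
      _ ≤ _ := Submodule.finrank_mono hsub3
  have hsub1 : Submodule.span (ZMod 2)
      (Set.range (Sum.elim
        (fun n : Fin (m' + 1) → ZMod 8 => of (ZMod 2) (Gp (m' + 1)) (gB n) * uu (m' + 1))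
        (fun d : Fin 4 × ({i : Fin (m' + 1) // i ≠ i₀} → ZMod 8) =>
          of (ZMod 2) (Gp (m' + 1)) (hgen (m' + 1) * gD i₀ d) * uu (m' + 1)))) ≤
      LinearMap.range T1 := by
    rw [Submodule.span_le]
    rintro x ⟨i, rfl⟩
    cases i with
    | inl n => exact ⟨of (ZMod 2) (Gp (m' + 1)) (gB n), by rw [hT1, LinearMap.mulRight_apply]; rfl⟩
    | inr d => exact ⟨of (ZMod 2) (Gp (m' + 1)) (hgen (m' + 1) * gD i₀ d),
        by rw [hT1, LinearMap.mulRight_apply]; rfl⟩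
  have hlow1 : 12 * 8 ^ m' ≤ Module.finrank (ZMod 2) (LinearMap.range T1) := by
    calc 12 * 8 ^ m'
        = Fintype.card ((Fin (m' + 1) → ZMod 8) ⊕ Fin 4 × ({i : Fin (m' + 1) // i ≠ i₀} → ZMod 8)) :=
          hcardI.symm
      _ = Module.finrank (ZMod 2) (Submodule.span (ZMod 2) (Set.range _)) :=
          (finrank_span_eq_card (indep1 i₀)).symm
      _ ≤ _ := Submodule.finrank_mono hsub1
  -- inclusions between ranges and kernels
  have hu4 : uu (m' + 1) ^ 3 * uu (m' + 1) = 0 := by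
    rw [← pow_succ, uu_pow4]
  have hincl31 : LinearMap.range T3 ≤ LinearMap.ker T1 := by
    rintro x ⟨y, rfl⟩
    rw [LinearMap.mem_ker, hT1, hT3, LinearMap.mulRight_apply, LinearMap.mulRight_apply,
      mul_assoc, hu4, mul_zero]
  have hincl13 : LinearMap.range T1 ≤ LinearMap.ker T3 := by
    rintro x ⟨y, rfl⟩
    rw [LinearMap.mem_ker, hT1, hT3, LinearMap.mulRight_apply, LinearMap.mulRight_apply,
      mul_assoc, mul_comm (uu (m' + 1)), hu4, mul_zero]
  have hk1 : 4 * 8 ^ m' ≤ Module.finrank (ZMod 2) (LinearMap.ker T1) :=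
    le_trans hlow3 (Submodule.finrank_mono hincl31)
  have hk3 : 12 * 8 ^ m' ≤ Module.finrank (ZMod 2) (LinearMap.ker T3) :=
    le_trans hlow1 (Submodule.finrank_mono hincl13)
  have hrn1 := LinearMap.finrank_range_add_finrank_ker T1
  have hrn3 := LinearMap.finrank_range_add_finrank_ker T3
  rw [finrank_A] at hrn1 hrn3
  have hdim : 2 * 8 ^ (m' + 1) = 16 * 8 ^ m' := by rw [pow_succ]; ring
  have e1 : Module.finrank (ZMod 2) (LinearMap.range T1) = 12 * 8 ^ m' := by omega
  have e3 : Module.finrank (ZMod 2) (LinearMap.range T3) = 4 * 8 ^ m' := by omega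
  constructor
  · rw [e1, pow_succ]; omega
  · rw [e3, pow_succ]; omega

end RankAux

theorem rank_of_u_and_u_cubed (m : ℕ) (hm : 1 ≤ m) :
    Module.finrank (ZMod 2)
        (LinearMap.range (LinearMap.mulRight (ZMod 2) (uu m))) = 3 * 8 ^ m / 2 ∧
      Module.finrank (ZMod 2)
        (LinearMap.range (LinearMap.mulRight (ZMod 2) (uu m ^ 3))) = 8 ^ m / 2 :=
  RankAux.rank_main m hm

end
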